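/- Let M be a complex vector space with a monodromic structure of rank r: a rank-r Weyl system z_1,…,z_r, ∂_{z_1},…,∂_{z_r} with a decomposition M = ⊕_{χ∈ℚ} M^χ such that z_i(M^χ) ⊆ M^{χ+1}, ∂_{z_i}(M^χ) ⊆ M^{χ−1}, and θ_z − χ + r is locally nilpotent on M^χ, where θ_z := Σ_i z_i∘∂_{z_i}. Let N := ⊕_{α∈ℕ^r, j∈ℕ} M·(w^α⊗∂^j) (formal symbols), with ℂ-linear operators defined on generators m w^α⊗∂^j (m ∈ M) by: z_i ↦ (z_i m) w^α⊗∂^j; ∂_{z_i} ↦ (∂_{z_i} m) w^α⊗∂^j − m w^{α+e_i}⊗∂^{j+1}; w_i ↦ m w^{α+e_i}⊗∂^j; ∂_{w_i} ↦ α_i m w^{α−e_i}⊗∂^j − (z_i m) w^α⊗∂^{j+1}; ∂ ↦ m w^α⊗∂^{j+1}; ξ ↦ Σ_i (z_i m) w^{α+e_i}⊗∂^j − j·m w^α⊗∂^{j−1}. Define T := (Σ_i z_i∘∂_{z_i}) + ξ∘∂ + id and S := (Σ_i w_i∘∂_{w_i}) + ξ∘∂ + id as endomorphisms of N, and for β ∈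 ℚ, ℓ ∈ ℤ set E_{β,ℓ} := ⊕_{α∈ℕ^r, |α|+ℓ≥0} M^{β+|α|+ℓ}·(w^α⊗∂^{|α|+ℓ}). Then T∘S = S∘T, N = ⊕_{β∈ℚ, ℓ∈ℤ} E_{β,ℓ}, and on E_{β,ℓ} the operator S acts as multiplication by −ℓ while T − (β − r)·id is locally nilpotent. -/

import Mathlib

noncomputable section

/-- Let `M` be a complex vector space with a monodromic structure of
rank `r` (Weyl system `z_i, ∂_{z_i}`, decomposition `M = ⊕_χ M^χ`).  Let
`N := ⊕_{α ∈ ℕ^r, j ∈ ℕ} M·(w^α ⊗ ∂^j)` (encoded as `((Fin r →₀ ℕ) × ℕ) →₀ M`, the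
generator `m w^α ⊗ ∂^j` being `Finsupp.single (α, j) m`) with the operators
`z_i, ∂_{z_i}, w_i, ∂_{w_i}, ∂, ξ` given on generators as listed.  Let
`T := Σᵢ zᵢ∘∂_{z_i} + ξ∘∂ + id` and `S := Σᵢ wᵢ∘∂_{w_i} + ξ∘∂ + id`, and for `β ∈ ℚ`,
`ℓ ∈ ℤ` let `E_{β,ℓ} := ⊕_{α, |α|+ℓ ≥ 0} M^{β+|α|+ℓ}·(w^α ⊗ ∂^{|α|+ℓ})`.  Then `T` and
`S` commute, `N = ⊕_{β,ℓ} E_{β,ℓ}`, and on `E_{β,ℓ}` the operator `S` acts as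
multiplication by `-ℓ` while `T - (β - r)·id` is locally nilpotent. -/
theorem statement9 (r : ℕ) (hr : 1 ≤ r)
    (M : Type*) [AddCommGroup M] [Module ℂ M]
    (z dz : Fin r → Module.End ℂ M)
    (hzz : ∀ i j, z i * z j = z j * z i)
    (hdzdz : ∀ i j, dz i * dz j = dz j * dz i)
    (hdzz : ∀ i j, dz i * z j - z j * dz i = if i = j then 1 else 0)
    (Mc : ℚ → Submodule ℂ M)
    (hint : DirectSum.IsInternal Mc)
    (hMz : ∀ (i : Fin r) (χ : ℚ), ∀ m ∈ Mc χ, z i m ∈ Mc (χ + 1))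
    (hMdz : ∀ (i : Fin r) (χ : ℚ), ∀ m ∈ Mc χ, dz i m ∈ Mc (χ - 1))
    (hMnil : ∀ (χ : ℚ), ∀ m ∈ Mc χ, ∃ k : ℕ,
      ((((∑ i, z i * dz i) - ((χ : ℂ) - (r : ℂ)) • 1) ^ k) m = 0))
    -- the operators on `N = ⊕_{α,j} M·(w^α ⊗ ∂^j)`
    (Z Dz Wo Dw : Fin r → Module.End ℂ (((Fin r →₀ ℕ) × ℕ) →₀ M))
    (P Xi : Module.End ℂ (((Fin r →₀ ℕ) × ℕ) →₀ M))
    (hZ : ∀ (i : Fin r) (α : Fin r →₀ ℕ) (j : ℕ) (m : M),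
      Z i (Finsupp.single (α, j) m) = Finsupp.single (α, j) (z i m))
    (hDz : ∀ (i : Fin r) (α : Fin r →₀ ℕ) (j : ℕ) (m : M),
      Dz i (Finsupp.single (α, j) m) =
        Finsupp.single (α, j) (dz i m) -
          Finsupp.single (α + Finsupp.single i 1, j + 1) m)
    (hWo : ∀ (i : Fin r) (α : Fin r →₀ ℕ) (j : ℕ) (m : M),
      Wo i (Finsupp.single (α, j) m) = Finsupp.single (α + Finsupp.single i 1, j) m)
    (hDw : ∀ (i : Fin r) (α : Fin r →₀ ℕ) (j : ℕ) (m : M),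
      Dw i (Finsupp.single (α, j) m) =
        (α i : ℂ) • Finsupp.single (α - Finsupp.single i 1, j) m -
          Finsupp.single (α, j + 1) (z i m))
    (hP : ∀ (α : Fin r →₀ ℕ) (j : ℕ) (m : M),
      P (Finsupp.single (α, j) m) = Finsupp.single (α, j + 1) m)
    (hXi : ∀ (α : Fin r →₀ ℕ) (j : ℕ) (m : M),
      Xi (Finsupp.single (α, j) m) =
        (∑ i, Finsupp.single (α + Finsupp.single i 1, j) (z i m)) -
          (j : ℂ) • Finsupp.single (α, j - 1) m)
    (T S : Module.End ℂ (((Fin r →₀ ℕ) × ℕ) →₀ M))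
    (hT : T = (∑ i, Z i * Dz i) + Xi * P + 1)
    (hS : S = (∑ i, Wo i * Dw i) + Xi * P + 1)
    (E : ℚ → ℤ → Submodule ℂ (((Fin r →₀ ℕ) × ℕ) →₀ M))
    (hE : ∀ (β : ℚ) (ℓ : ℤ), E β ℓ =
      ⨆ (α : Fin r →₀ ℕ) (j : ℕ) (_ : (j : ℤ) = ((α.sum fun _ n => n : ℕ) : ℤ) + ℓ),
        (Mc (β + j)).map (Finsupp.lsingle (α, j))) :
    Commute T S ∧
    DirectSum.IsInternal (fun p : ℚ × ℤ => E p.1 p.2) ∧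
    (∀ (β : ℚ) (ℓ : ℤ), ∀ x ∈ E β ℓ, S x = (-(ℓ : ℂ)) • x) ∧
    (∀ (β : ℚ) (ℓ : ℤ), ∀ x ∈ E β ℓ, ∃ k : ℕ,
      (((T - ((β : ℂ) - (r : ℂ)) • 1) ^ k) x = 0)) := by
  classical
  have hsum : ∀ α : Fin r →₀ ℕ, (α.sum fun _ n => n) = ∑ i, α i :=
    fun α => Finsupp.sum_fintype _ _ (fun _ => rfl)
  -- action of `Xi * P` on generators
  have hXP : ∀ (α : Fin r →₀ ℕ) (j : ℕ) (m : M),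
      (Xi * P) (Finsupp.single (α, j) m)
        = (∑ i, Finsupp.single (α + Finsupp.single i 1, j + 1) (z i m))
          - ((j : ℂ) + 1) • Finsupp.single (α, j) m := by
    intro α j m
    rw [Module.End.mul_apply, hP, hXi]
    simp only [Nat.add_sub_cancel, Nat.cast_add, Nat.cast_one]
  -- action of `∑ Z i * Dz i` on generators
  have hZD : ∀ (α : Fin r →₀ ℕ) (j : ℕ) (m : M),
      (∑ i, Z i * Dz i) (Finsupp.single (α, j) m)
        = Finsupp.single (α, j) ((∑ i, z i * dz i) m)
          - ∑ i, Finsupp.single (α + Finsupp.single i 1, j + 1) (z i m) := by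
    intro α j m
    rw [LinearMap.sum_apply]
    have h1 : ∀ i ∈ Finset.univ, (Z i * Dz i) (Finsupp.single (α, j) m)
        = Finsupp.single (α, j) (z i (dz i m))
          - Finsupp.single (α + Finsupp.single i 1, j + 1) (z i m) := by
      intro i _
      rw [Module.End.mul_apply, hDz, map_sub, hZ, hZ]
    rw [Finset.sum_congr rfl h1, Finset.sum_sub_distrib]
    congr 1
    rw [LinearMap.sum_apply]
    simp only [Module.End.mul_apply]
    exact (map_sum (Finsupp.singleAddHom (α, j)) _ _).symm
  -- action of `T` on generators
  have hTs : ∀ (α : Fin r →₀ ℕ) (j : ℕ) (m : M),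
      T (Finsupp.single (α, j) m)
        = Finsupp.single (α, j) ((∑ i, z i * dz i) m)
          - (j : ℂ) • Finsupp.single (α, j) m := by
    intro α j m
    rw [hT]
    simp only [LinearMap.add_apply, Module.End.one_apply, hXP α j m, hZD α j m]
    module
  -- action of `∑ Wo i * Dw i` on generators
  have hWD : ∀ (α : Fin r →₀ ℕ) (j : ℕ) (m : M),
      (∑ i, Wo i * Dw i) (Finsupp.single (α, j) m)
        = (((α.sum fun _ n => n : ℕ) : ℂ)) • Finsupp.single (α, j) m
          - ∑ i, Finsupp.single (α + Finsupp.single i 1, j + 1) (z i m) := by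
    intro α j m
    rw [LinearMap.sum_apply]
    have h1 : ∀ i ∈ Finset.univ, (Wo i * Dw i) (Finsupp.single (α, j) m)
        = (α i : ℂ) • Finsupp.single (α, j) m
          - Finsupp.single (α + Finsupp.single i 1, j + 1) (z i m) := by
      intro i _
      rw [Module.End.mul_apply, hDw, map_sub, map_smul, hWo, hWo]
      rcases Nat.eq_zero_or_pos (α i) with h | h
      · simp [h]
      · rw [tsub_add_cancel_of_le (Finsupp.single_le_iff.mpr h)]
    rw [Finset.sum_congr rfl h1, Finset.sum_sub_distrib, ← Finset.sum_smul]
    congr 2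
    rw [hsum α, Nat.cast_sum]
  -- action of `S` on generators
  have hSs : ∀ (α : Fin r →₀ ℕ) (j : ℕ) (m : M),
      S (Finsupp.single (α, j) m)
        = (((α.sum fun _ n => n : ℕ) : ℂ) - (j : ℂ)) • Finsupp.single (α, j) m := by
    intro α j m
    rw [hS]
    simp only [LinearMap.add_apply, Module.End.one_apply, hXP α j m, hWD α j m]
    module
  -- T and S commute
  have hcomm : Commute T S := by
    show T * S = S * T
    refine Finsupp.lhom_ext fun a m => ?_
    obtain ⟨α, j⟩ := a
    rw [Module.End.mul_apply, Module.End.mul_apply, hSs, map_smul, hTs,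
      map_sub, map_smul, hSs, hSs]
    module
  -- reduction of statements about E β ℓ to generators
  have hEle : ∀ (β : ℚ) (ℓ : ℤ) (K : Submodule ℂ (((Fin r →₀ ℕ) × ℕ) →₀ M)),
      (∀ (α : Fin r →₀ ℕ) (j : ℕ), (j : ℤ) = ((α.sum fun _ n => n : ℕ) : ℤ) + ℓ →
        ∀ m ∈ Mc (β + j), Finsupp.single (α, j) m ∈ K) → E β ℓ ≤ K := by
    intro β ℓ K h
    rw [hE]
    refine iSup_le fun α => iSup_le fun j => iSup_le fun hj => ?_
    rw [Submodule.map_le_iff_le_comap]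
    intro m hm
    simpa using h α j hj m hm
  -- statement 3 : S acts as -ℓ on E β ℓ
  have part3 : ∀ (β : ℚ) (ℓ : ℤ), ∀ x ∈ E β ℓ, S x = (-(ℓ : ℂ)) • x := by
    intro β ℓ x hx
    have : E β ℓ ≤ LinearMap.ker (S - (-(ℓ : ℂ)) • 1) := by
      refine hEle β ℓ _ fun α j hj m hm => ?_
      rw [LinearMap.mem_ker, LinearMap.sub_apply, LinearMap.smul_apply,
        Module.End.one_apply, hSs, sub_eq_zero]
      have hc : ((α.sum fun _ n => n : ℕ) : ℂ) - (j : ℂ) = -(ℓ : ℂ) := by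
        have : ((j : ℤ) : ℂ) = (((α.sum fun _ n => n : ℕ) : ℤ) : ℂ) + ((ℓ : ℤ) : ℂ) := by
          exact_mod_cast congrArg (fun t : ℤ => (t : ℂ)) hj
        push_cast at this ⊢
        linear_combination -this
      rw [hc]
    have := this hx
    rw [LinearMap.mem_ker, LinearMap.sub_apply, LinearMap.smul_apply,
      Module.End.one_apply, sub_eq_zero] at this
    exact this
  -- statement 4 : local nilpotency of T - (β - r) on E β ℓ
  have part4 : ∀ (β : ℚ) (ℓ : ℤ), ∀ x ∈ E β ℓ, ∃ k : ℕ,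
      (((T - ((β : ℂ) - (r : ℂ)) • 1) ^ k) x = 0) := by
    intro β ℓ x hx
    set A : Module.End ℂ (((Fin r →₀ ℕ) × ℕ) →₀ M) := T - ((β : ℂ) - (r : ℂ)) • 1 with hA
    have hmono : Monotone (fun k : ℕ => LinearMap.ker (A ^ k)) := by
      intro k k' hkk' y hy
      rw [LinearMap.mem_ker] at hy ⊢
      have : A ^ k' = A ^ (k' - k) * A ^ k := by
        rw [← pow_add, Nat.sub_add_cancel hkk']
      rw [this, Module.End.mul_apply, hy, map_zero]
    have hdir : Directed (· ≤ ·) (fun k : ℕ => LinearMap.ker (A ^ k)) :=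
      hmono.directed_le
    have hle : E β ℓ ≤ ⨆ k : ℕ, LinearMap.ker (A ^ k) := by
      refine hEle β ℓ _ fun α j hj m hm => ?_
      -- action of A on the (α, j) component
      have hAs : ∀ m' : M, A (Finsupp.single (α, j) m')
          = Finsupp.single (α, j)
              (((∑ i, z i * dz i) - (((β + (j : ℚ) : ℚ) : ℂ) - (r : ℂ)) • 1) m') := by
        intro m'
        have hd : (((β + (j : ℚ) : ℚ) : ℂ) - (r : ℂ)) = ((β : ℂ) - (r : ℂ)) + (j : ℂ) := by
          push_cast; ring
        rw [hA, LinearMap.sub_apply, LinearMap.smul_apply, Module.End.one_apply, hTs,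
          LinearMap.sub_apply, LinearMap.smul_apply, Module.End.one_apply,
          Finsupp.single_sub, ← Finsupp.smul_single, hd]
        module
      have hAk : ∀ (k : ℕ) (m' : M), (A ^ k) (Finsupp.single (α, j) m')
          = Finsupp.single (α, j)
              ((((∑ i, z i * dz i) - (((β + (j : ℚ) : ℚ) : ℂ) - (r : ℂ)) • 1) ^ k) m') := by
        intro k
        induction k with
        | zero => intro m'; simp
        | succ n ih =>
          intro m'
          rw [pow_succ, pow_succ, Module.End.mul_apply, Module.End.mul_apply, hAs, ih]
      obtain ⟨k, hk⟩ := hMnil (β + (j : ℚ)) m hm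
      refine Submodule.mem_iSup_of_mem k ?_
      rw [LinearMap.mem_ker, hAk k m, hk, Finsupp.single_zero]
    obtain ⟨k, hk⟩ := (Submodule.mem_iSup_of_directed _ hdir).mp (hle hx)
    exact ⟨k, hk⟩
  -- internality
  -- the projections of M onto the Mc χ
  set e : DirectSum ℚ (fun χ => Mc χ) ≃ₗ[ℂ] M :=
    LinearEquiv.ofBijective (DirectSum.coeLinearMap Mc) hint with he
  set prM : ℚ → M →ₗ[ℂ] M := fun χ =>
    (Mc χ).subtype ∘ₗ (DirectSum.component ℂ ℚ (fun χ => Mc χ) χ) ∘ₗ e.symm.toLinearMap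
    with hprM
  have hpr1 : ∀ (χ : ℚ) (m : M), m ∈ Mc χ → prM χ m = m := by
    intro χ m hm
    have h := hint.ofBijective_coeLinearMap_of_mem (i := χ) hm
    show ((e.symm m) χ : M) = m
    rw [he, h]
  have hpr2 : ∀ (χ χ' : ℚ) (m : M), χ' ≠ χ → m ∈ Mc χ' → prM χ m = 0 := by
    intro χ χ' m hne hm
    have h := hint.ofBijective_coeLinearMap_of_mem_ne (i := χ') (j := χ) hne hm
    show ((e.symm m) χ : M) = 0
    rw [he, h]
    rfl
  -- projections of N onto the pieces E β ℓ
  set π : ℚ → ℤ → Module.End ℂ (((Fin r →₀ ℕ) × ℕ) →₀ M) := fun β ℓ =>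
    Finsupp.lsum ℂ (fun p : (Fin r →₀ ℕ) × ℕ =>
      if (p.2 : ℤ) = ((p.1.sum fun _ n => n : ℕ) : ℤ) + ℓ then
        (Finsupp.lsingle p) ∘ₗ (prM (β + p.2)) else 0) with hπ
  have hπs : ∀ (β : ℚ) (ℓ : ℤ) (α : Fin r →₀ ℕ) (j : ℕ) (m : M),
      π β ℓ (Finsupp.single (α, j) m)
        = if (j : ℤ) = ((α.sum fun _ n => n : ℕ) : ℤ) + ℓ then
            Finsupp.single (α, j) (prM (β + j) m) else 0 := by
    intro β ℓ α j m
    rw [hπ]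
    rw [Finsupp.lsum_single]
    split_ifs with h <;> simp
  have hπ_id : ∀ (β : ℚ) (ℓ : ℤ), ∀ x ∈ E β ℓ, π β ℓ x = x := by
    intro β ℓ x hx
    have : E β ℓ ≤ LinearMap.ker (π β ℓ - 1) := by
      refine hEle β ℓ _ fun α j hj m hm => ?_
      rw [LinearMap.mem_ker, LinearMap.sub_apply, Module.End.one_apply, sub_eq_zero,
        hπs, if_pos hj, hpr1 (β + j) m hm]
    have := this hx
    rw [LinearMap.mem_ker, LinearMap.sub_apply, Module.End.one_apply, sub_eq_zero] at this
    exact this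
  have hπ_0 : ∀ (β β' : ℚ) (ℓ ℓ' : ℤ), (β', ℓ') ≠ (β, ℓ) →
      E β' ℓ' ≤ LinearMap.ker (π β ℓ) := by
    intro β β' ℓ ℓ' hne
    refine hEle β' ℓ' _ fun α j hj m hm => ?_
    rw [LinearMap.mem_ker, hπs]
    split_ifs with h
    · have hℓ : ℓ' = ℓ := by omega
      have hβ : β' ≠ β := by
        intro hβ; exact hne (by rw [hβ, hℓ])
      rw [hpr2 (β + j) (β' + j) m (by intro hc; exact hβ (by linarith [hc])) hm,
        Finsupp.single_zero]
    · rfl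
  have hindep : iSupIndep (fun p : ℚ × ℤ => E p.1 p.2) := by
    intro p
    rw [Submodule.disjoint_def]
    intro x hx hx'
    have hker : (⨆ q, ⨆ (_ : q ≠ p), E q.1 q.2) ≤ LinearMap.ker (π p.1 p.2) := by
      refine iSup_le fun q => iSup_le fun hq => ?_
      exact hπ_0 p.1 q.1 p.2 q.2 (by simpa [Prod.ext_iff] using hq)
    have h0 : π p.1 p.2 x = 0 := hker hx'
    rw [← hπ_id p.1 p.2 x hx, h0]
  have htop : (⨆ p : ℚ × ℤ, E p.1 p.2) = ⊤ := by
    rw [eq_top_iff]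
    intro x _
    induction x using Finsupp.induction with
    | zero => exact Submodule.zero_mem _
    | single_add a m f _ _ ih =>
      refine Submodule.add_mem _ ?_ (ih Submodule.mem_top)
      obtain ⟨α, j⟩ := a
      have hm : m ∈ (⊤ : Submodule ℂ M) := Submodule.mem_top
      rw [← hint.submodule_iSup_eq_top] at hm
      have : Finsupp.single (α, j) m ∈
          Submodule.map (Finsupp.lsingle (α, j) : M →ₗ[ℂ] _) (⨆ χ, Mc χ) :=
        ⟨m, hm, rfl⟩
      rw [Submodule.map_iSup] at this
      refine (iSup_le fun χ => ?_ : (⨆ χ, Submodule.map (Finsupp.lsingle (α, j)) (Mc χ))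
        ≤ ⨆ p : ℚ × ℤ, E p.1 p.2) this
      refine le_trans ?_ (le_iSup (fun p : ℚ × ℤ => E p.1 p.2)
        ((χ - j, (j : ℤ) - ((α.sum fun _ n => n : ℕ) : ℤ))))
      rw [hE]
      refine le_iSup_of_le α (le_iSup_of_le j (le_iSup_of_le (by ring) ?_))
      have : (χ - (j : ℚ)) + (j : ℚ) = χ := by ring
      rw [this]
  refine ⟨hcomm, ?_, part3, part4⟩
  rw [DirectSum.isInternal_submodule_iff_iSupIndep_and_iSup_eq_top]
  exact ⟨hindep, htop⟩
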